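/- For any two subgraphs γ₁ and γ₂ of a finite graph Γ, the first Betti numbers satisfy ℓ(γ₁) + ℓ(γ₂) ≤ ℓ(γ₁ ∩ γ₂) + ℓ(γ₁ ∪ γ₂), where ℓ(γ) denotes the dimension of the first homology (cycle rank) of γ. -/

import Mathlib

/-- A finite multigraph on vertex type `V` with edge type `E` is given by an
endpoint map `G : E → Sym2 V`. -/
structure Subgraph {V E : Type} [Fintype V] [Fintype E] [DecidableEq V] [DecidableEq E]
    (G : E → Sym2 V) where
  verts : Finset V
  edges : Finset E
  incl : ∀ e ∈ edges, ∀ v ∈ G e, v ∈ verts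

variable {V E : Type} [Fintype V] [Fintype E] [DecidableEq V] [DecidableEq E]

/-- Number of connected components of a subgraph. -/
noncomputable def comps (G : E → Sym2 V) (H : Subgraph G) : ℕ :=
  Nat.card (Quot fun a b : {v : V // v ∈ H.verts} => ∃ e ∈ H.edges, G e = s(a.1, b.1))

/-- Cycle rank (first Betti number) `ℓ(H) = |E(H)| - |V(H)| + c(H)`. -/
noncomputable def cycleRank (G : E → Sym2 V) (H : Subgraph G) : ℤ :=
  (H.edges.card : ℤ) - (H.verts.card : ℤ) + (comps G H : ℤ)

/-- Union of subgraphs (vertex- and edge-wise). -/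
def Subgraph.union (G : E → Sym2 V) (H K : Subgraph G) : Subgraph G where
  verts := H.verts ∪ K.verts
  edges := H.edges ∪ K.edges
  incl := by
    intro e he v hv
    rcases Finset.mem_union.mp he with h | h
    · exact Finset.mem_union_left _ (H.incl e h v hv)
    · exact Finset.mem_union_right _ (K.incl e h v hv)

/-- Intersection of subgraphs (vertex- and edge-wise). -/
def Subgraph.inter (G : E → Sym2 V) (H K : Subgraph G) : Subgraph G where
  verts := H.verts ∩ K.verts
  edges := H.edges ∩ K.edges
  incl := by
    intro e he v hv
    have h1 := Finset.mem_inter.mp he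
    exact Finset.mem_inter.mpr ⟨H.incl e h1.1 v hv, K.incl e h1.2 v hv⟩

section Aux

open Module Submodule

variable (G : E → Sym2 V)

/-- Signed boundary vector of an edge, with an arbitrary chosen orientation. -/
noncomputable def bdry (e : E) : V → ℚ :=
  fun w => (if w = (Quot.out (G e)).1 then 1 else 0) -
    (if w = (Quot.out (G e)).2 then 1 else 0)

variable (H : Subgraph G)

/-- The incidence matrix of a subgraph. -/
noncomputable def mat : Matrix {e : E // e ∈ H.edges} V ℚ := fun e => bdry G e.1

lemma mat_mulVecLin (f : V → ℚ) (e : {e : E // e ∈ H.edges}) :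
    (mat G H).mulVecLin f e = f (Quot.out (G e.1)).1 - f (Quot.out (G e.1)).2 := by
  simp [mat, bdry, Matrix.mulVecLin_apply, Matrix.mulVec, dotProduct,
    sub_mul, Finset.sum_sub_distrib, ite_mul, one_mul, zero_mul]

abbrev rel : {v : V // v ∈ H.verts} → {v : V // v ∈ H.verts} → Prop :=
  fun a b => ∃ e ∈ H.edges, G e = s(a.1, b.1)

/-- The assembling linear map from (functions on non-vertices) × (functions on
components) to functions on `V`. -/
noncomputable def asm :
    (({v : V // v ∉ H.verts} → ℚ) × (Quot (rel G H) → ℚ)) →ₗ[ℚ] (V → ℚ) where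
  toFun x := fun v => if hv : v ∈ H.verts then x.2 (Quot.mk _ ⟨v, hv⟩) else x.1 ⟨v, hv⟩
  map_add' x y := by funext v; by_cases hv : v ∈ H.verts <;> simp [hv]
  map_smul' c x := by funext v; by_cases hv : v ∈ H.verts <;> simp [hv]

lemma asm_injective : Function.Injective (asm G H) := by
  intro x y hxy
  ext a
  · have := congrFun hxy a.1
    simpa [asm, a.2] using this
  · induction a using Quot.ind with
    | _ a =>
      have := congrFun hxy a.1
      simpa [asm, a.2] using this

lemma range_asm : LinearMap.range (asm G H) = LinearMap.ker (mat G H).mulVecLin := by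
  ext f
  simp only [LinearMap.mem_range, LinearMap.mem_ker]
  constructor
  · rintro ⟨x, rfl⟩
    funext e
    rw [mat_mulVecLin]
    obtain ⟨e, he⟩ := e
    set p := Quot.out (G e) with hp
    have hGe : G e = s(p.1, p.2) := by rw [hp]; exact (Quot.out_eq (G e)).symm
    have h1 : p.1 ∈ H.verts := H.incl e he _ (by rw [hGe]; exact Sym2.mem_mk_left _ _)
    have h2 : p.2 ∈ H.verts := H.incl e he _ (by rw [hGe]; exact Sym2.mem_mk_right _ _)
    have hq : Quot.mk (rel G H) ⟨p.1, h1⟩ = Quot.mk (rel G H) ⟨p.2, h2⟩ :=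
      Quot.sound ⟨e, he, hGe⟩
    simp [asm, h1, h2, hq]
  · intro hf
    have key : ∀ a b : {v : V // v ∈ H.verts}, rel G H a b → f a.1 = f b.1 := by
      rintro a b ⟨e, he, hG⟩
      have h0 : f (Quot.out (G e)).1 - f (Quot.out (G e)).2 = 0 := by
        have := congrFun hf ⟨e, he⟩
        rwa [mat_mulVecLin] at this
      set p := Quot.out (G e) with hp
      have hGe : G e = s(p.1, p.2) := by rw [hp]; exact (Quot.out_eq (G e)).symm
      rw [hGe] at hG
      rcases Sym2.eq_iff.mp hG.symm with ⟨h1, h2⟩ | ⟨h1, h2⟩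
      · rw [h1, h2]; linarith
      · rw [h1, h2]; linarith
    refine ⟨(fun v => f v.1, Quot.lift (fun v => f v.1) key), ?_⟩
    funext v
    by_cases hv : v ∈ H.verts <;> simp [asm, hv]

lemma finrank_ker_mat :
    finrank ℚ (LinearMap.ker (mat G H).mulVecLin) =
      Fintype.card {v : V // v ∉ H.verts} + comps G H := by
  have : Fintype (Quot (rel G H)) := Fintype.ofFinite _
  rw [← range_asm, LinearMap.finrank_range_of_inj (asm_injective G H),
    Module.finrank_prod, Module.finrank_pi, Module.finrank_pi]
  rw [comps, Nat.card_eq_fintype_card]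

lemma rank_mat_add_comps : (mat G H).rank + comps G H = H.verts.card := by
  have h1 := LinearMap.finrank_range_add_finrank_ker (mat G H).mulVecLin
  rw [finrank_ker_mat, Module.finrank_pi] at h1
  have h2 : Fintype.card {v : V // v ∉ H.verts} = Fintype.card V - H.verts.card := by
    simp [Fintype.card_subtype_compl]
  have h3 : H.verts.card ≤ Fintype.card V := H.verts.card_le_univ
  have h4 : (mat G H).rank = finrank ℚ (LinearMap.range (mat G H).mulVecLin) := rfl
  omega

lemma rank_mat_eq_span :
    (mat G H).rank = finrank ℚ (span ℚ (bdry G '' ↑H.edges)) := by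
  have hr : Set.range (mat G H) = bdry G '' ↑H.edges := by
    ext f
    simp only [Set.mem_range, Set.mem_image, Finset.mem_coe]
    constructor
    · rintro ⟨⟨e, he⟩, rfl⟩; exact ⟨e, he, rfl⟩
    · rintro ⟨e, he, rfl⟩; exact ⟨⟨e, he⟩, rfl⟩
  rw [Matrix.rank_eq_finrank_span_row, ← hr]; rfl

lemma cycleRank_eq :
    cycleRank G H = (H.edges.card : ℤ) -
      (finrank ℚ (span ℚ (bdry G '' ↑H.edges)) : ℤ) := by
  have h := rank_mat_add_comps G H
  rw [rank_mat_eq_span] at h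
  rw [cycleRank]
  omega

end Aux

open Module Submodule in
/-- Submodularity of the cycle rank: `ℓ(γ₁) + ℓ(γ₂) ≤ ℓ(γ₁ ∩ γ₂) + ℓ(γ₁ ∪ γ₂)`. -/
theorem cycleRank_submodular (G : E → Sym2 V) (γ₁ γ₂ : Subgraph G) :
    cycleRank G γ₁ + cycleRank G γ₂ ≤
      cycleRank G (Subgraph.inter G γ₁ γ₂) + cycleRank G (Subgraph.union G γ₁ γ₂) := by
  rw [cycleRank_eq, cycleRank_eq, cycleRank_eq, cycleRank_eq]
  have hei : (Subgraph.inter G γ₁ γ₂).edges = γ₁.edges ∩ γ₂.edges := rfl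
  have heu : (Subgraph.union G γ₁ γ₂).edges = γ₁.edges ∪ γ₂.edges := rfl
  rw [hei, heu]
  have hcard : ((γ₁.edges ∩ γ₂.edges).card : ℤ) + ((γ₁.edges ∪ γ₂.edges).card : ℤ)
      = (γ₁.edges.card : ℤ) + (γ₂.edges.card : ℤ) := by
    exact_mod_cast congrArg (Nat.cast : ℕ → ℤ)
      (Finset.card_inter_add_card_union γ₁.edges γ₂.edges)
  set s₁ := span ℚ (bdry G '' ↑γ₁.edges) with hs₁
  set s₂ := span ℚ (bdry G '' ↑γ₂.edges) with hs₂
  have hU : span ℚ (bdry G '' ↑(γ₁.edges ∪ γ₂.edges)) = s₁ ⊔ s₂ := by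
    rw [hs₁, hs₂, Finset.coe_union, Set.image_union, Submodule.span_union]
  have hI : span ℚ (bdry G '' ↑(γ₁.edges ∩ γ₂.edges)) ≤ s₁ ⊓ s₂ := by
    refine le_inf (span_mono (Set.image_mono ?_)) (span_mono (Set.image_mono ?_))
    · exact Finset.coe_subset.mpr Finset.inter_subset_left
    · exact Finset.coe_subset.mpr Finset.inter_subset_right
  have hfr := Submodule.finrank_sup_add_finrank_inf_eq s₁ s₂
  have hIle : finrank ℚ (span ℚ (bdry G '' ↑(γ₁.edges ∩ γ₂.edges))) ≤ finrank ℚ ↥(s₁ ⊓ s₂) :=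
    Submodule.finrank_mono hI
  rw [hU]
  linarith
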